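/- Let C be a real d×m matrix, η > 0 and λ > 0 real constants, and let E be a real d×d matrix with nonnegative diagonal entries E_{jj} ≥ 0. Let Σ₀ = C·Cᵀ, so Σ_{jj,0} = ‖C^j‖₂² where C^j is the j-th row of C. Define the diagonal d×d matrix S by S_{jj} = max(0, 1 − ηλ/√(Σ_{jj,0} + E_{jj})) (with S_{jj} = 0 if Σ_{jj,0} + E_{jj} = 0), and set Ŵ = S·C. Let r = #{ j : C^j ≠ 0 } and k = #{ j : Σ_{jj,0} ≥ η²λ² }. Then the suboptimality of Ŵ for the group-sparse proximal objective satisfies: (1/(2η))·‖Ŵ − C‖_F² + λ·‖Ŵ‖_{2,1} − inf_{W ∈ ℝ^{d×m}} [ (1/(2η))·‖W − C‖_F² + λ·‖W‖_{2,1} ] ≤ (1/η)·[ (r/(ηλ))·(max_{j} ‖C^j‖₂)² + max_{j} ‖C^j‖₂ ] · [ (k/(2ηλ))·max_{j : Σ_{jj,0} ≥ η²λ²} E_{jj} + max(0, r − k)·max_{j : Σ_{jj,0} < η²λ²} √(E_{jj}) ], where each maximum over an empty index set is interpreted as 0 (its multiplying factor then vanishes). -/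

import Mathlib

open scoped BigOperators

/-- Frobenius norm of a real `d×m` matrix: `√(∑_{j,i} X_{ji}²)`. -/
noncomputable def frobNorm {d m : ℕ} (X : Matrix (Fin d) (Fin m) ℝ) : ℝ :=
  Real.sqrt (∑ j : Fin d, ∑ i : Fin m, (X j i) ^ 2)

/-- `ℓ_{2,1}` norm of a real `d×m` matrix: sum of Euclidean norms of its rows. -/
noncomputable def l21Norm {d m : ℕ} (X : Matrix (Fin d) (Fin m) ℝ) : ℝ :=
  ∑ j : Fin d, Real.sqrt (∑ i : Fin m, (X j i) ^ 2)

/-- Euclidean norm of the `j`-th row of a real `d×m` matrix. -/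
noncomputable def rowNorm {d m : ℕ} (X : Matrix (Fin d) (Fin m) ℝ) (j : Fin d) : ℝ :=
  Real.sqrt (∑ i : Fin m, (X j i) ^ 2)

/-- Scalar optimality of soft thresholding. -/
lemma scalar_min (η lam a u : ℝ) (hη : 0 < η) (hlam : 0 < lam) (ha : 0 ≤ a) (hu : 0 ≤ u) :
    (1/(2*η))*(max 0 (a - η*lam) - a)^2 + lam * max 0 (a - η*lam) ≤
      (1/(2*η))*(u - a)^2 + lam*u := by
  rcases le_or_gt a (η*lam) with h | h
  · rw [max_eq_left (by linarith)]
    have key : (1/(2*η))*(u - a)^2 + lam*u - ((1/(2*η))*(0 - a)^2 + lam*0)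
        = (1/(2*η))*(u*(u - 2*a + 2*η*lam)) := by
      field_simp; ring
    nlinarith [mul_nonneg hu (by linarith : (0:ℝ) ≤ u - 2*a + 2*η*lam),
      mul_nonneg (by positivity : (0:ℝ) ≤ 1/(2*η))
        (mul_nonneg hu (by linarith : (0:ℝ) ≤ u - 2*a + 2*η*lam))]
  · rw [max_eq_right (by linarith)]
    have key : (1/(2*η))*(u - a)^2 + lam*u - ((1/(2*η))*(a - η*lam - a)^2 + lam*(a - η*lam))
        = (1/(2*η))*(u - a + η*lam)^2 := by
      field_simp; ring
    nlinarith [mul_nonneg (by positivity : (0:ℝ) ≤ 1/(2*η)) (sq_nonneg (u - a + η*lam))]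

/-- Row-level optimality of soft thresholding. -/
lemma row_min (m : ℕ) (η lam : ℝ) (hη : 0 < η) (hlam : 0 < lam) (c w : Fin m → ℝ) :
    (1/(2*η))*(∑ i, ((max 0 (1 - η*lam/Real.sqrt (∑ i, (c i)^2)))*c i - c i)^2)
      + lam*Real.sqrt (∑ i, ((max 0 (1 - η*lam/Real.sqrt (∑ i, (c i)^2)))*c i)^2)
    ≤ (1/(2*η))*(∑ i, (w i - c i)^2) + lam*Real.sqrt (∑ i, (w i)^2) := by
  set a := Real.sqrt (∑ i, (c i)^2) with hadef
  set u := Real.sqrt (∑ i, (w i)^2) with hudef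
  have hca : (0:ℝ) ≤ ∑ i, (c i)^2 := Finset.sum_nonneg fun i _ => sq_nonneg _
  have hwa : (0:ℝ) ≤ ∑ i, (w i)^2 := Finset.sum_nonneg fun i _ => sq_nonneg _
  have ha : 0 ≤ a := Real.sqrt_nonneg _
  have hu : 0 ≤ u := Real.sqrt_nonneg _
  have ha2 : a^2 = ∑ i, (c i)^2 := Real.sq_sqrt hca
  have hu2 : u^2 = ∑ i, (w i)^2 := Real.sq_sqrt hwa
  set t := max 0 (1 - η*lam/a) with htdef
  have ht0 : 0 ≤ t := le_max_left _ _
  have hcs : (∑ i, w i * c i) ≤ u * a := by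
    simpa [hudef, hadef] using Real.sum_mul_le_sqrt_mul_sqrt Finset.univ w c
  have hta : t * a = max 0 (a - η*lam) := by
    rcases eq_or_lt_of_le ha with h0 | h0
    · rw [← h0, mul_zero]
      exact (max_eq_left (by nlinarith)).symm
    · rw [htdef, max_mul_of_nonneg _ _ ha, zero_mul]
      congr 1
      field_simp
  have h1 : (∑ i, (t*c i - c i)^2) = (t*a - a)^2 := by
    have e1 : (∑ i, (t*c i - c i)^2) = (t-1)^2 * ∑ i, (c i)^2 := by
      rw [Finset.mul_sum]; exact Finset.sum_congr rfl fun i _ => by ring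
    rw [e1, ← ha2]; ring
  have h2 : Real.sqrt (∑ i, (t*c i)^2) = t * a := by
    have e2 : (∑ i, (t*c i)^2) = (t*a)^2 := by
      have e3 : (∑ i, (t*c i)^2) = t^2 * ∑ i, (c i)^2 := by
        rw [Finset.mul_sum]; exact Finset.sum_congr rfl fun i _ => by ring
      rw [e3, ← ha2]; ring
    rw [e2, Real.sqrt_sq (mul_nonneg ht0 ha)]
  rw [h1, h2, hta]
  have hsum : (∑ i, (w i - c i)^2)
      = (∑ i, (w i)^2) - 2*(∑ i, w i * c i) + (∑ i, (c i)^2) := by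
    rw [Finset.mul_sum, ← Finset.sum_sub_distrib, ← Finset.sum_add_distrib]
    exact Finset.sum_congr rfl fun i _ => by ring
  calc (1/(2*η))*(max 0 (a - η*lam) - a)^2 + lam * max 0 (a - η*lam)
      ≤ (1/(2*η))*(u - a)^2 + lam*u := scalar_min η lam a u hη hlam ha hu
    _ ≤ (1/(2*η))*(∑ i, (w i - c i)^2) + lam*u := by
        have h4 : (u - a)^2 ≤ ∑ i, (w i - c i)^2 := by nlinarith [hcs]
        have h5 : (0:ℝ) ≤ 1/(2*η) := by positivity
        nlinarith [mul_le_mul_of_nonneg_left h4 h5]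

/-- Per-row excess bound for the noisy soft-thresholding step. -/
lemma row_excess (η lam a E : ℝ) (hη : 0 < η) (hlam : 0 < lam) (ha : 0 ≤ a) (hE : 0 ≤ E)
    (s t : ℝ) (hs : s = if a^2 + E = 0 then 0 else max 0 (1 - η*lam/Real.sqrt (a^2+E)))
    (ht : t = max 0 (1 - η*lam/a)) :
    ((1/(2*η))*(s*a - a)^2 + lam*(s*a)) - ((1/(2*η))*(t*a - a)^2 + lam*(t*a)) ≤
      if η^2*lam^2 ≤ a^2 then E/(4*η) else a * Real.sqrt E / η := by
  have hel : 0 < η*lam := mul_pos hη hlam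
  by_cases hbig : η^2*lam^2 ≤ a^2
  · rw [if_pos hbig]
    have hael : η*lam ≤ a := by nlinarith
    have hapos : 0 < a := lt_of_lt_of_le hel hael
    set b := Real.sqrt (a^2 + E) with hbdef
    have hb2 : b^2 = a^2 + E := Real.sq_sqrt (by positivity)
    have hab : a ≤ b := by
      rw [hbdef]
      nth_rewrite 1 [← Real.sqrt_sq ha]
      exact Real.sqrt_le_sqrt (by linarith)
    have hbpos : 0 < b := lt_of_lt_of_le hapos hab
    have hsne : a^2 + E ≠ 0 := by positivity
    have hs' : s = 1 - η*lam/b := by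
      rw [hs, if_neg hsne, max_eq_right]
      rw [sub_nonneg, div_le_one hbpos]; linarith
    have ht' : t = 1 - η*lam/a := by
      rw [ht, max_eq_right]
      rw [sub_nonneg, div_le_one hapos]; exact hael
    set q : ℝ := 1 - a/b with hqdef
    clear_value q
    have hq0 : 0 ≤ q := by
      rw [hqdef, sub_nonneg, div_le_one hbpos]; exact hab
    have hq1 : q ≤ 1 := by
      rw [hqdef]
      have : 0 ≤ a/b := by positivity
      linarith
    have hkey : q * (2*η^2*lam^2) ≤ E := by
      have h1 : (b - a) * (2*(η*lam)) ≤ E := by nlinarith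
      have h2 : q = (b - a)/b := by rw [hqdef]; field_simp
      rw [h2]
      have h3 : (b - a)/b ≤ (b - a)/(η*lam) :=
        div_le_div_of_nonneg_left (by linarith) hel (le_trans hael hab)
      calc (b - a)/b * (2*η^2*lam^2) ≤ (b - a)/(η*lam) * (2*η^2*lam^2) := by
            apply mul_le_mul_of_nonneg_right h3; positivity
        _ = (b - a) * (2*(η*lam)) := by field_simp
        _ ≤ E := h1
    have hD : ((1/(2*η))*(s*a - a)^2 + lam*(s*a)) - ((1/(2*η))*(t*a - a)^2 + lam*(t*a))
        = (η*lam^2/2) * q^2 := by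
      rw [hs', ht', hqdef]
      field_simp
      ring
    rw [hD]
    have hq2 : q^2 ≤ q := by nlinarith
    calc (η*lam^2/2) * q^2 ≤ (η*lam^2/2) * q := by
          apply mul_le_mul_of_nonneg_left hq2; positivity
      _ ≤ E/(4*η) := by
          rw [le_div_iff₀ (by positivity : (0:ℝ) < 4*η)]
          have hr : η * lam^2/2 * q * (4*η) = q*(2*η^2*lam^2) := by ring
          linarith
  · rw [if_neg hbig]
    push_neg at hbig
    have hael : a < η*lam := by nlinarith
    rcases eq_or_lt_of_le ha with h0 | hapos
    · rw [← h0]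
      simp
    · have ht' : t = 0 := by
        rw [ht, max_eq_left]
        rw [sub_nonpos, le_div_iff₀ hapos, one_mul]; linarith
      have hsE : s ≤ Real.sqrt E / (η*lam) := by
        by_cases hz : a^2 + E = 0
        · rw [hs, if_pos hz]; positivity
        · rw [hs, if_neg hz]
          set b := Real.sqrt (a^2 + E) with hbdef
          have hb2 : b^2 = a^2 + E := Real.sq_sqrt (by positivity)
          have hbE : b ≤ a + Real.sqrt E := by
            rw [hbdef]
            calc Real.sqrt (a^2 + E) ≤ Real.sqrt ((a + Real.sqrt E)^2) := by
                  apply Real.sqrt_le_sqrt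
                  nlinarith [Real.sq_sqrt hE, Real.sqrt_nonneg E,
                    mul_nonneg ha (Real.sqrt_nonneg E)]
              _ = a + Real.sqrt E := Real.sqrt_sq (by positivity)
          rcases le_or_gt (1 - η*lam/b) 0 with hneg | hpos
          · rw [max_eq_left hneg]; positivity
          · rw [max_eq_right hpos.le]
            have hbpos : 0 < b := by
              rw [hbdef]
              exact Real.sqrt_pos.2 (by nlinarith)
            have hbgt : η*lam < b := by
              rw [sub_pos, div_lt_one hbpos] at hpos; exact hpos
            have h1 : 1 - η*lam/b = (b - η*lam)/b := by field_simp
            rw [h1]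
            calc (b - η*lam)/b ≤ (b - η*lam)/(η*lam) :=
                  div_le_div_of_nonneg_left (by linarith) hel hbgt.le
              _ ≤ Real.sqrt E / (η*lam) :=
                  (div_le_div_iff_of_pos_right hel).2 (by linarith)
      have hs0 : 0 ≤ s := by
        rw [hs]
        split
        · exact le_refl 0
        · exact le_max_left _ _
      have hs1 : s ≤ 1 := by
        rw [hs]
        split
        · norm_num
        · rename_i hz
          have hbnn : 0 ≤ Real.sqrt (a^2+E) := Real.sqrt_nonneg _
          have : 0 ≤ η*lam/Real.sqrt (a^2+E) := by positivity
          rw [max_le_iff]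
          constructor <;> [norm_num; linarith]
      rw [ht']
      have hDf : ((1/(2*η))*(s*a - a)^2 + lam*(s*a)) - ((1/(2*η))*(0*a - a)^2 + lam*(0*a))
          = s*(lam*a) + (a^2/(2*η))*(s*(s-2)) := by
        field_simp
        ring
      rw [hDf]
      have hneg2 : (a^2/(2*η))*(s*(s-2)) ≤ 0 :=
        mul_nonpos_of_nonneg_of_nonpos (by positivity)
          (mul_nonpos_of_nonneg_of_nonpos hs0 (by linarith))
      have hstep : s*(lam*a) ≤ a*Real.sqrt E/η := by
        calc s*(lam*a) ≤ (Real.sqrt E/(η*lam))*(lam*a) := by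
              apply mul_le_mul_of_nonneg_right hsE; positivity
          _ = a*Real.sqrt E/η := by field_simp
      linarith

lemma row_scalarize_sum (m : ℕ) (c : Fin m → ℝ) (s : ℝ) :
    (∑ i, (s*c i - c i)^2)
      = (s*Real.sqrt (∑ i, (c i)^2) - Real.sqrt (∑ i, (c i)^2))^2 := by
  have hca : (0:ℝ) ≤ ∑ i, (c i)^2 := Finset.sum_nonneg fun i _ => sq_nonneg _
  have e1 : (∑ i, (s*c i - c i)^2) = (s-1)^2 * ∑ i, (c i)^2 := by
    rw [Finset.mul_sum]; exact Finset.sum_congr rfl fun i _ => by ring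
  rw [e1]
  linear_combination ((s-1)^2) * (Real.sq_sqrt hca).symm

lemma row_scalarize_sqrt (m : ℕ) (c : Fin m → ℝ) (s : ℝ) (hs : 0 ≤ s) :
    Real.sqrt (∑ i, (s*c i)^2) = s * Real.sqrt (∑ i, (c i)^2) := by
  have hca : (0:ℝ) ≤ ∑ i, (c i)^2 := Finset.sum_nonneg fun i _ => sq_nonneg _
  have e3 : (∑ i, (s*c i)^2) = (s * Real.sqrt (∑ i, (c i)^2))^2 := by
    have e4 : (∑ i, (s*c i)^2) = s^2 * ∑ i, (c i)^2 := by
      rw [Finset.mul_sum]; exact Finset.sum_congr rfl fun i _ => by ring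
    rw [e4]
    linear_combination (s^2) * (Real.sq_sqrt hca).symm
  rw [e3, Real.sqrt_sq (mul_nonneg hs (Real.sqrt_nonneg _))]

/-- paper, one-iteration utility lemma for the group-sparse
(ℓ_{2,1}-regularized) model-protected proximal step: with `Σ₀ = C·Cᵀ`, the
perturbed soft-thresholding matrix `Ŵ = S·C` (where
`S_{jj} = max(0, 1 − ηλ/√(Σ_{jj,0}+E_{jj}))`, set to `0` when `Σ_{jj,0}+E_{jj}=0`),
`r = #{j : C^j ≠ 0}` and `k = #{j : Σ_{jj,0} ≥ η²λ²}`, the excess of the proximal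
objective at `Ŵ` over its infimum is bounded by
`(1/η)·[(r/(ηλ))·(max_j‖C^j‖₂)² + max_j‖C^j‖₂]·[(k/(2ηλ))·max_{j:Σ_{jj,0}≥η²λ²}E_{jj}
 + max(0, r−k)·max_{j:Σ_{jj,0}<η²λ²}√E_{jj}]`,
where maxima over empty index sets are `0` (encoded via real-valued `⨆` over a
possibly empty subtype, which is `0` in `ℝ`). -/
theorem group_sparse_noisy_prox_utility (d m : ℕ) (η lam : ℝ) (hη : 0 < η)
    (hlam : 0 < lam) (C : Matrix (Fin d) (Fin m) ℝ) (E : Matrix (Fin d) (Fin d) ℝ)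
    (hE : ∀ j : Fin d, 0 ≤ E j j)
    (S : Matrix (Fin d) (Fin d) ℝ)
    (hSdiag : ∀ j j' : Fin d, j ≠ j' → S j j' = 0)
    (hS : ∀ j : Fin d,
      S j j = if (C * C.transpose) j j + E j j = 0 then 0
        else max 0 (1 - η * lam / Real.sqrt ((C * C.transpose) j j + E j j)))
    (What : Matrix (Fin d) (Fin m) ℝ) (hWhat : What = S * C)
    (r k : ℕ)
    (hr : r = Nat.card {j : Fin d // ∃ i : Fin m, C j i ≠ 0})
    (hk : k = Nat.card {j : Fin d // η ^ 2 * lam ^ 2 ≤ (C * C.transpose) j j}) :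
    (1 / (2 * η)) * frobNorm (What - C) ^ 2 + lam * l21Norm What -
        (⨅ W : Matrix (Fin d) (Fin m) ℝ,
          (1 / (2 * η)) * frobNorm (W - C) ^ 2 + lam * l21Norm W) ≤
      (1 / η) *
        ((r / (η * lam)) * (⨆ j : Fin d, rowNorm C j) ^ 2 + ⨆ j : Fin d, rowNorm C j) *
        ((k / (2 * η * lam)) *
            (⨆ j : {j : Fin d // η ^ 2 * lam ^ 2 ≤ (C * C.transpose) j j}, E j j) +
          max 0 ((r : ℝ) - (k : ℝ)) *
            (⨆ j : {j : Fin d // (C * C.transpose) j j < η ^ 2 * lam ^ 2},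
              Real.sqrt (E j j))) := by
  classical
  set a : Fin d → ℝ := fun j => Real.sqrt (∑ i, (C j i)^2) with hadef
  have hSig : ∀ j, (C * C.transpose) j j = ∑ i, (C j i)^2 := by
    intro j
    simp [Matrix.mul_apply, Matrix.transpose_apply, sq]
  have hca : ∀ j, (0:ℝ) ≤ ∑ i, (C j i)^2 :=
    fun j => Finset.sum_nonneg fun i _ => sq_nonneg _
  have ha2 : ∀ j, (a j)^2 = ∑ i, (C j i)^2 := fun j => Real.sq_sqrt (hca j)
  have hSiga : ∀ j, (C * C.transpose) j j = (a j)^2 := fun j => (hSig j).trans (ha2 j).symm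
  have ha0 : ∀ j, 0 ≤ a j := fun j => Real.sqrt_nonneg _
  -- the exact proximal minimizer
  set Wstar : Matrix (Fin d) (Fin m) ℝ :=
    Matrix.of (fun j i => (max 0 (1 - η*lam/ a j)) * C j i) with hWstardef
  set F : Matrix (Fin d) (Fin m) ℝ → ℝ :=
    fun W => (1 / (2 * η)) * frobNorm (W - C) ^ 2 + lam * l21Norm W with hFdef
  have hFrow : ∀ W : Matrix (Fin d) (Fin m) ℝ,
      F W = ∑ j, ((1/(2*η))*(∑ i, (W j i - C j i)^2)
        + lam*Real.sqrt (∑ i, (W j i)^2)) := by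
    intro W
    have h1 : frobNorm (W - C) ^ 2 = ∑ j, ∑ i, (W j i - C j i)^2 := by
      rw [frobNorm, Real.sq_sqrt]
      simp [Matrix.sub_apply]
      exact Finset.sum_nonneg fun j _ => Finset.sum_nonneg fun i _ => sq_nonneg _
    rw [hFdef]
    simp only [h1, l21Norm, Finset.mul_sum]
    rw [← Finset.sum_add_distrib]
  -- step 1 : Wstar minimizes F
  have hmin : ∀ W, F Wstar ≤ F W := by
    intro W
    rw [hFrow, hFrow]
    apply Finset.sum_le_sum
    intro j _
    have := row_min m η lam hη hlam (fun i => C j i) (fun i => W j i)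
    simpa [hWstardef] using this
  have hinf : F Wstar ≤ ⨅ W, F W := le_ciInf hmin
  -- row form of What
  have hWrow : ∀ j i, What j i = S j j * C j i := by
    intro j i
    rw [hWhat, Matrix.mul_apply]
    rw [Finset.sum_eq_single j]
    · intro b _ hb
      rw [hSdiag j b (Ne.symm hb), zero_mul]
    · intro h; exact absurd (Finset.mem_univ j) h
  have hs0 : ∀ j, 0 ≤ S j j := by
    intro j
    rw [hS j]
    split
    · exact le_refl 0
    · exact le_max_left _ _
  -- per-row excess bound
  have hrowbd : ∀ j : Fin d,
      ((1/(2*η))*(∑ i, (What j i - C j i)^2) + lam*Real.sqrt (∑ i, (What j i)^2))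
        - ((1/(2*η))*(∑ i, (Wstar j i - C j i)^2) + lam*Real.sqrt (∑ i, (Wstar j i)^2))
      ≤ if η^2*lam^2 ≤ (a j)^2 then E j j/(4*η) else a j * Real.sqrt (E j j) / η := by
    intro j
    have hWj : ∀ i, What j i = S j j * C j i := hWrow j
    have hWsj : ∀ i, Wstar j i = (max 0 (1 - η*lam/ a j)) * C j i := fun i => rfl
    simp only [hWj, hWsj]
    rw [row_scalarize_sum m (fun i => C j i) (S j j),
      row_scalarize_sum m (fun i => C j i) (max 0 (1 - η*lam/ a j)),
      row_scalarize_sqrt m (fun i => C j i) (S j j) (hs0 j),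
      row_scalarize_sqrt m (fun i => C j i) (max 0 (1 - η*lam/ a j)) (le_max_left _ _)]
    exact row_excess η lam (a j) (E j j) hη hlam (ha0 j) (hE j) (S j j) _
      (by rw [hS j, hSiga j]) rfl
  -- counting sets
  set Q : Fin d → Prop := fun j => η ^ 2 * lam ^ 2 ≤ (C * C.transpose) j j with hQdef
  have hrowbd' : ∀ j : Fin d,
      ((1/(2*η))*(∑ i, (What j i - C j i)^2) + lam*Real.sqrt (∑ i, (What j i)^2))
        - ((1/(2*η))*(∑ i, (Wstar j i - C j i)^2) + lam*Real.sqrt (∑ i, (Wstar j i)^2))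
      ≤ if Q j then E j j/(4*η) else a j * Real.sqrt (E j j) / η := by
    intro j
    have h := hrowbd j
    rwa [← hSiga j] at h
  set kset : Finset (Fin d) := Finset.univ.filter Q with hksetdef
  set rset : Finset (Fin d) := Finset.univ.filter (fun j => ∃ i, C j i ≠ 0) with hrsetdef
  have hkcard : kset.card = k := by
    rw [hk, Nat.card_eq_fintype_card, Fintype.card_subtype]
  have hrcard : rset.card = r := by
    rw [hr, Nat.card_eq_fintype_card, Fintype.card_subtype]
  have hQnz : ∀ j, Q j → (∃ i, C j i ≠ 0) := by
    intro j hj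
    by_contra h
    push_neg at h
    have hz : (C * C.transpose) j j = 0 := by
      rw [hSig]
      exact Finset.sum_eq_zero fun i _ => by rw [h i]; ring
    have hpos : 0 < η ^ 2 * lam ^ 2 := by positivity
    rw [hQdef] at hj
    simp only [hz] at hj
    linarith
  have hsub : kset ⊆ rset := by
    intro j hj
    rw [hksetdef, Finset.mem_filter] at hj
    rw [hrsetdef, Finset.mem_filter]
    exact ⟨Finset.mem_univ j, hQnz j hj.2⟩
  have hkr : k ≤ r := by
    rw [← hkcard, ← hrcard]
    exact Finset.card_le_card hsub
  -- suprema
  set M : ℝ := ⨆ j : Fin d, rowNorm C j with hMdef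
  set ME : ℝ := ⨆ j : {j : Fin d // η ^ 2 * lam ^ 2 ≤ (C * C.transpose) j j}, E j j
    with hMEdef
  set MS : ℝ := ⨆ j : {j : Fin d // (C * C.transpose) j j < η ^ 2 * lam ^ 2},
    Real.sqrt (E j j) with hMSdef
  have hMa : ∀ j, a j ≤ M := by
    intro j
    exact le_ciSup (Set.Finite.bddAbove (Set.finite_range (rowNorm C))) j
  have hM0 : 0 ≤ M := Real.iSup_nonneg fun j => Real.sqrt_nonneg _
  have hME0 : 0 ≤ ME := Real.iSup_nonneg fun j => hE _
  have hMS0 : 0 ≤ MS := Real.iSup_nonneg fun j => Real.sqrt_nonneg _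
  have hMEle : ∀ j, Q j → E j j ≤ ME := by
    intro j hj
    exact le_ciSup (f := fun j : {j : Fin d // η ^ 2 * lam ^ 2 ≤ (C * C.transpose) j j}
      => E j j) (Set.Finite.bddAbove (Set.finite_range _)) ⟨j, hj⟩
  have hMSle : ∀ j, ¬ Q j → Real.sqrt (E j j) ≤ MS := by
    intro j hj
    have hj' : (C * C.transpose) j j < η ^ 2 * lam ^ 2 := not_le.1 hj
    exact le_ciSup (f := fun j : {j : Fin d // (C * C.transpose) j j < η ^ 2 * lam ^ 2}
      => Real.sqrt (E j j)) (Set.Finite.bddAbove (Set.finite_range _)) ⟨j, hj'⟩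
  -- sum of the per-row bounds
  have hsum : (∑ j, (if Q j then E j j/(4*η) else a j * Real.sqrt (E j j)/η))
      ≤ (k:ℝ) * (ME/(4*η)) + ((r:ℝ) - (k:ℝ)) * (M*MS/η) := by
    rw [Finset.sum_ite]
    have part1 : (∑ j ∈ Finset.univ.filter Q, E j j/(4*η)) ≤ (k:ℝ) * (ME/(4*η)) := by
      calc (∑ j ∈ Finset.univ.filter Q, E j j/(4*η))
          ≤ (Finset.univ.filter Q).card • (ME/(4*η)) := by
            apply Finset.sum_le_card_nsmul
            intro j hj
            rw [Finset.mem_filter] at hj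
            exact div_le_div_of_nonneg_right (hMEle j hj.2) (by positivity)
        _ = (k:ℝ) * (ME/(4*η)) := by
            rw [nsmul_eq_mul]
            congr 1
            rw [← hksetdef, hkcard]
    have part2 : (∑ j ∈ Finset.univ.filter (fun j => ¬ Q j), a j * Real.sqrt (E j j)/η)
        ≤ ((r:ℝ) - (k:ℝ)) * (M*MS/η) := by
      calc (∑ j ∈ Finset.univ.filter (fun j => ¬ Q j), a j * Real.sqrt (E j j)/η)
          ≤ (∑ j ∈ Finset.univ.filter (fun j => ¬ Q j),
              (if ∃ i, C j i ≠ 0 then M*MS/η else 0)) := by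
            apply Finset.sum_le_sum
            intro j hj
            rw [Finset.mem_filter] at hj
            by_cases hnz : ∃ i, C j i ≠ 0
            · rw [if_pos hnz]
              exact div_le_div_of_nonneg_right
                (mul_le_mul (hMa j) (hMSle j hj.2) (Real.sqrt_nonneg _) hM0) hη.le
            · rw [if_neg hnz]
              push_neg at hnz
              have haz : a j = 0 := by
                rw [hadef]
                simp only
                rw [Finset.sum_eq_zero (fun i _ => by rw [hnz i]; ring), Real.sqrt_zero]
              rw [haz, zero_mul, zero_div]
        _ = ((Finset.univ.filter (fun j => ¬ Q j)).filter
              (fun j => ∃ i, C j i ≠ 0)).card • (M*MS/η) := by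
            rw [← Finset.sum_filter, Finset.sum_const]
        _ = ((r:ℝ) - (k:ℝ)) * (M*MS/η) := by
            rw [nsmul_eq_mul]
            congr 1
            have hset : (Finset.univ.filter (fun j => ¬ Q j)).filter
                (fun j => ∃ i, C j i ≠ 0) = rset \ kset := by
              rw [hrsetdef, hksetdef]
              ext j
              simp only [Finset.mem_filter, Finset.mem_sdiff, Finset.mem_univ, true_and]
              tauto
            rw [hset, Finset.card_sdiff_of_subset hsub, hkcard, hrcard, Nat.cast_sub hkr]
    exact add_le_add part1 part2
  -- final arithmetic
  have hrk0 : (0:ℝ) ≤ (r:ℝ) - (k:ℝ) := sub_nonneg.2 (Nat.cast_le.2 hkr)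
  have hmaxrk : max 0 ((r:ℝ) - (k:ℝ)) = (r:ℝ) - (k:ℝ) := max_eq_right hrk0
  set A : ℝ := ((r:ℝ) / (η * lam)) * M ^ 2 + M with hAdef
  have hMA : M ≤ A := by
    have h0 : (0:ℝ) ≤ ((r:ℝ) / (η * lam)) * M ^ 2 := by positivity
    rw [hAdef]; linarith
  have hA0 : 0 ≤ A := le_trans hM0 hMA
  have hterm2 : ((r:ℝ) - (k:ℝ)) * (M*MS/η) ≤ (1/η) * A * (((r:ℝ) - (k:ℝ)) * MS) := by
    have h1 : ((r:ℝ) - (k:ℝ)) * (M*MS/η) = (1/η) * M * (((r:ℝ) - (k:ℝ)) * MS) := by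
      field_simp
    rw [h1]
    have h2 : (1/η) * M ≤ (1/η) * A :=
      mul_le_mul_of_nonneg_left hMA (by positivity)
    exact mul_le_mul_of_nonneg_right h2 (mul_nonneg hrk0 hMS0)
  have hterm1 : (k:ℝ) * (ME/(4*η)) ≤ (1/η) * A * (((k:ℝ)/(2*η*lam)) * ME) := by
    rcases Nat.eq_zero_or_pos k with hk0 | hk1
    · subst hk0; simp
    · have hne : kset.Nonempty := by
        rw [← Finset.card_pos, hkcard]; exact hk1
      obtain ⟨j, hj⟩ := hne
      rw [hksetdef, Finset.mem_filter] at hj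
      have hQj : η ^ 2 * lam ^ 2 ≤ (C * C.transpose) j j := hj.2
      rw [hSiga j] at hQj
      have helM : η * lam ≤ M := by
        have : η * lam ≤ a j := by nlinarith [ha0 j, mul_pos hη hlam]
        exact le_trans this (hMa j)
      have helA : η * lam ≤ A := le_trans helM hMA
      have hf0 : (0:ℝ) ≤ ((k:ℝ)/(2*η*lam)) * ME := by positivity
      calc (k:ℝ) * (ME/(4*η)) ≤ (k:ℝ) * (ME/(2*η)) := by
            have : ME/(4*η) ≤ ME/(2*η) :=
              div_le_div_of_nonneg_left hME0 (by positivity) (by linarith)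
            exact mul_le_mul_of_nonneg_left this (Nat.cast_nonneg k)
        _ = (1/η) * (η*lam) * (((k:ℝ)/(2*η*lam)) * ME) := by
            field_simp
        _ ≤ (1/η) * A * (((k:ℝ)/(2*η*lam)) * ME) := by
            apply mul_le_mul_of_nonneg_right _ hf0
            exact mul_le_mul_of_nonneg_left helA (by positivity)
  -- put everything together
  have hfinal : F What - (⨅ W : Matrix (Fin d) (Fin m) ℝ, F W) ≤
      (1 / η) * A * (((k:ℝ) / (2 * η * lam)) * ME + max 0 ((r : ℝ) - (k : ℝ)) * MS) := by
    calc F What - (⨅ W : Matrix (Fin d) (Fin m) ℝ, F W)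
        ≤ F What - F Wstar := by linarith [hinf]
      _ = ∑ j, (((1/(2*η))*(∑ i, (What j i - C j i)^2)
            + lam*Real.sqrt (∑ i, (What j i)^2))
          - ((1/(2*η))*(∑ i, (Wstar j i - C j i)^2)
            + lam*Real.sqrt (∑ i, (Wstar j i)^2))) := by
          rw [hFrow What, hFrow Wstar, ← Finset.sum_sub_distrib]
      _ ≤ ∑ j, (if Q j then E j j/(4*η) else a j * Real.sqrt (E j j)/η) :=
          Finset.sum_le_sum fun j _ => hrowbd' j
      _ ≤ (k:ℝ) * (ME/(4*η)) + ((r:ℝ) - (k:ℝ)) * (M*MS/η) := hsum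
      _ ≤ (1/η) * A * (((k:ℝ)/(2*η*lam)) * ME)
            + (1/η) * A * (((r:ℝ) - (k:ℝ)) * MS) := add_le_add hterm1 hterm2
      _ = (1 / η) * A * (((k:ℝ) / (2 * η * lam)) * ME
            + max 0 ((r : ℝ) - (k : ℝ)) * MS) := by
          rw [hmaxrk]; ring
  exact hfinal
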